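/- Let F and G be nonempty finite sets of affine functions from ℝ to ℝ, and let H = { f ∘ g : f ∈ F, g ∈ G }. Then the lower envelope H_↓ is piecewise linear with p(H_↓) ≤ 4·p(F_↓) + 2·p(G_↓) + 2·p(G_↑) pieces, where F_↓, G_↓ are the pointwise minima over F, G and G_↑ is the pointwise maximum over G. -/

import Mathlib

/-- `f : ℝ → ℝ` is piecewise linear with at most `k` pieces: there are
breakpoints `c 0 ≤ c 1 ≤ … ≤ c (k-2)` such that on each of the `k` intervals
`(-∞, c 0], [c 0, c 1], …, [c (k-2), ∞)` the function `f` agrees with some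
affine function `x ↦ a * x + b`. -/
def PiecewiseAffineWith (f : ℝ → ℝ) (k : ℕ) : Prop :=
  0 < k ∧ ∃ c : Fin (k - 1) → ℝ, Monotone c ∧
    ∀ j : Fin k, ∃ a b : ℝ, ∀ y : ℝ,
      (∀ i : Fin (k - 1), (i : ℕ) < (j : ℕ) → c i ≤ y) →
      (∀ i : Fin (k - 1), (j : ℕ) ≤ (i : ℕ) → y ≤ c i) →
      f y = a * y + b

/-- `p(f)`: the least `k` such that `f` is piecewise linear with at most `k` pieces. -/
noncomputable def nPieces (f : ℝ → ℝ) : ℕ := sInf {k | PiecewiseAffineWith f k}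

namespace PL
open Set

def Wit (f : ℝ → ℝ) (n : ℕ) : Prop :=
  ∃ c : Fin n → ℝ, Monotone c ∧ ∃ P Q : Fin (n+1) → ℝ,
    ∀ (j : Fin (n+1)) (y : ℝ),
      (∀ i : Fin n, (i : ℕ) < (j : ℕ) → c i ≤ y) →
      (∀ i : Fin n, (j : ℕ) ≤ (i : ℕ) → y ≤ c i) →
      f y = P j * y + Q j

theorem paw_of_wit {f : ℝ → ℝ} {n : ℕ} (h : Wit f n) : PiecewiseAffineWith f (n+1) := by
  obtain ⟨c, hc, P, Q, hPQ⟩ := h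
  exact ⟨Nat.succ_pos n, c, hc, fun j => ⟨P j, Q j, hPQ j⟩⟩

theorem wit_of_paw {f : ℝ → ℝ} {k : ℕ} (h : PiecewiseAffineWith f k) : Wit f (k-1) := by
  obtain ⟨hk, c, hc, hp⟩ := h
  obtain ⟨m, rfl⟩ : ∃ m, k = m + 1 := ⟨k-1, (Nat.succ_pred_eq_of_pos hk).symm⟩
  refine ⟨c, hc, ?_⟩
  choose P Q hPQ using hp
  exact ⟨P, Q, hPQ⟩

theorem wit_congr {f g : ℝ → ℝ} {n : ℕ} (hfg : ∀ x, f x = g x) (h : Wit f n) : Wit g n := by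
  obtain ⟨c, hc, P, Q, hPQ⟩ := h
  exact ⟨c, hc, P, Q, fun j y h1 h2 => (hfg y) ▸ hPQ j y h1 h2⟩

theorem wit_succ {f : ℝ → ℝ} {n : ℕ} (h : Wit f n) : Wit f (n+1) := by
  obtain ⟨c, hc, P, Q, hPQ⟩ := h
  refine ⟨fun i => if h : (i : ℕ) < n then c ⟨i, h⟩ else
      (if hn : 0 < n then c ⟨n-1, by omega⟩ else 0), ?_,
    fun j => P ⟨min (j : ℕ) n, by omega⟩, fun j => Q ⟨min (j : ℕ) n, by omega⟩, ?_⟩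
  · intro i j hij
    have hij' : (i : ℕ) ≤ (j : ℕ) := hij
    dsimp only
    by_cases hi : (i : ℕ) < n <;> by_cases hj : (j : ℕ) < n
    · rw [dif_pos hi, dif_pos hj]; exact hc (show ((⟨(i:ℕ),hi⟩ : Fin n)) ≤ ⟨(j:ℕ),hj⟩ from hij')
    · have hn : 0 < n := by omega
      rw [dif_pos hi, dif_neg hj, dif_pos hn]
      exact hc (show ((⟨(i:ℕ),hi⟩ : Fin n)) ≤ ⟨n-1, by omega⟩ by simp [Fin.le_def]; omega)
    · omega
    · rw [dif_neg hi, dif_neg hj]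
  · intro j y h1 h2
    have := hPQ ⟨min (j : ℕ) n, by omega⟩ y ?_ ?_
    · exact this
    · intro i hi
      have h1' := h1 ⟨i, by omega⟩ (by simp at hi ⊢; omega)
      simpa [dif_pos i.2] using h1'
    · intro i hi
      simp at hi
      have hjn : (j : ℕ) ≤ (i : ℕ) := by omega
      have h2' := h2 ⟨i, by omega⟩ (by simpa using hjn)
      simpa [dif_pos i.2] using h2'

end PL

namespace PL
open Set

theorem wit_mono {f : ℝ → ℝ} {n m : ℕ} (h : Wit f n) (hnm : n ≤ m) : Wit f m := by
  induction m with
  | zero => simpa [Nat.le_zero.mp hnm] using h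
  | succ k ih =>
    rcases Nat.lt_or_ge n (k+1) with h' | h'
    · exact wit_succ (ih (by omega))
    · have : n = k + 1 := by omega
      exact this ▸ h

theorem two_point {a₁ b₁ a₂ b₂ y₁ y₂ : ℝ} (hne : y₁ ≠ y₂)
    (h1 : a₁ * y₁ + b₁ = a₂ * y₁ + b₂) (h2 : a₁ * y₂ + b₁ = a₂ * y₂ + b₂) :
    a₁ = a₂ ∧ b₁ = b₂ := by
  have ha : a₁ = a₂ := by
    have h3 : a₁ * (y₁ - y₂) = a₂ * (y₁ - y₂) := by ring_nf; linarith
    exact mul_right_cancel₀ (sub_ne_zero.mpr hne) h3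
  refine ⟨ha, ?_⟩
  rw [ha] at h1
  linarith

theorem pigeon {ι : Type*} (I : Finset ι) (S : ι → Set ℝ) (E : Set ℝ) (hE : E.Infinite)
    (hcov : ∀ y ∈ E, ∃ i ∈ I, y ∈ S i) : ∃ i ∈ I, (E ∩ S i).Infinite := by
  by_contra hcon
  push_neg at hcon
  have : E ⊆ ⋃ i ∈ I, (E ∩ S i) := by
    intro y hy
    obtain ⟨i, hi, hyS⟩ := hcov y hy
    exact Set.mem_biUnion hi ⟨hy, hyS⟩
  exact hE (Set.Finite.subset (Set.Finite.biUnion I.finite_toSet (fun i hi => hcon i hi)) this)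

/-- if all breakpoints avoid the open interval `(y₁, y₂)`, the whole `[y₁,y₂]`
lies in a single piece region. -/
theorem piece_of_avoid {n : ℕ} (c : Fin n → ℝ) (hc : Monotone c) (y₁ y₂ : ℝ) (h12 : y₁ ≤ y₂)
    (havoid : ∀ i, c i ≤ y₁ ∨ y₂ ≤ c i) :
    ∃ j : Fin (n+1), ∀ y ∈ Icc y₁ y₂,
      (∀ i : Fin n, (i : ℕ) < (j : ℕ) → c i ≤ y) ∧ (∀ i : Fin n, (j : ℕ) ≤ (i : ℕ) → y ≤ c i) := by
  classical
  by_cases hex : (Finset.univ.filter (fun i : Fin n => y₂ ≤ c i)).Nonempty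
  · set i0 := (Finset.univ.filter (fun i : Fin n => y₂ ≤ c i)).min' hex with hi0
    have hi0mem := (Finset.univ.filter (fun i : Fin n => y₂ ≤ c i)).min'_mem hex
    rw [Finset.mem_filter] at hi0mem
    refine ⟨⟨(i0 : ℕ), by omega⟩, fun y hy => ⟨?_, ?_⟩⟩
    · intro i hi
      have : ¬ (y₂ ≤ c i) := by
        intro hcon
        have : i0 ≤ i := Finset.min'_le _ i (Finset.mem_filter.mpr ⟨Finset.mem_univ i, hcon⟩)
        simp only [Fin.le_def] at this
        simp at hi; omega
      rcases havoid i with h | h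
      · exact h.trans hy.1
      · exact absurd h this
    · intro i hi
      have : c i0 ≤ c i := hc (by simp only [Fin.le_def]; simpa using hi)
      exact hy.2.trans (hi0mem.2.trans this)
  · refine ⟨⟨n, by omega⟩, fun y hy => ⟨?_, ?_⟩⟩
    · intro i _
      rcases havoid i with h | h
      · exact h.trans hy.1
      · exact absurd (Finset.filter_nonempty_iff.mpr ⟨i, Finset.mem_univ _, h⟩) hex
    · intro i hi
      simp at hi
      omega

/-- every point is in some piece region -/
theorem cover {n : ℕ} (c : Fin n → ℝ) (hc : Monotone c) (y : ℝ) :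
    ∃ j : Fin (n+1),
      (∀ i : Fin n, (i : ℕ) < (j : ℕ) → c i ≤ y) ∧ (∀ i : Fin n, (j : ℕ) ≤ (i : ℕ) → y ≤ c i) := by
  obtain ⟨j, hj⟩ := piece_of_avoid c hc y y le_rfl (fun i => le_total (c i) y)
  exact ⟨j, hj y ⟨le_rfl, le_rfl⟩⟩

theorem wit_neg_fun {f : ℝ → ℝ} {n : ℕ} (h : Wit f n) : Wit (fun x => -(f x)) n := by
  obtain ⟨c, hc, P, Q, hPQ⟩ := h
  exact ⟨c, hc, fun j => -(P j), fun j => -(Q j), fun j y h1 h2 => by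
    dsimp only; rw [hPQ j y h1 h2]; ring⟩

theorem wit_neg_arg {f : ℝ → ℝ} {n : ℕ} (h : Wit f n) : Wit (fun x => f (-x)) n := by
  obtain ⟨c, hc, P, Q, hPQ⟩ := h
  refine ⟨fun i => -(c ⟨n-1-(i:ℕ), by omega⟩), ?_,
    fun j => -(P ⟨n-(j:ℕ), by omega⟩), fun j => Q ⟨n-(j:ℕ), by omega⟩, ?_⟩
  · intro i j hij
    have hij' : (i : ℕ) ≤ (j : ℕ) := hij
    dsimp only
    simp only [neg_le_neg_iff]
    exact hc (by simp only [Fin.le_def]; omega)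
  · intro j y h1 h2
    have key := hPQ ⟨n-(j:ℕ), by omega⟩ (-y) ?_ ?_
    · dsimp only; rw [key]; ring
    · intro i hi
      simp only at hi
      have hj' : (j : ℕ) ≤ n := by omega
      have h2' := h2 ⟨n-1-(i:ℕ), by omega⟩ (by simp only; omega)
      dsimp only at h2'
      have heq : (⟨n-1-(n-1-(i:ℕ)), by omega⟩ : Fin n) = i := Fin.ext (by simp only; omega)
      rw [heq] at h2'
      linarith
    · intro i hi
      simp only at hi
      have hj' : (j : ℕ) ≤ n := by omega
      have h1' := h1 ⟨n-1-(i:ℕ), by omega⟩ (by simp only; omega)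
      dsimp only at h1'
      have heq : (⟨n-1-(n-1-(i:ℕ)), by omega⟩ : Fin n) = i := Fin.ext (by simp only; omega)
      rw [heq] at h1'
      linarith
end PL

namespace PL
open Set

theorem wit_min_affine {f : ℝ → ℝ} {n : ℕ} (hW : Wit f n) (hcont : Continuous f)
    (a b : ℝ) (hanti : Antitone (fun x => f x - (a * x + b))) :
    Wit (fun x => min (f x) (a * x + b)) (n + 1) := by
  classical
  obtain ⟨c, hc, P, Q, hPQ⟩ := hW
  set s : Set ℝ := {x | a * x + b ≤ f x} with hs
  have hsclosed : IsClosed s := by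
    have : s = (fun x => f x - (a * x + b)) ⁻¹' (Ici 0) := by
      ext x; simp [hs, sub_nonneg]
    rw [this]
    exact IsClosed.preimage (hcont.sub ((continuous_const.mul continuous_id).add continuous_const)) isClosed_Ici
  by_cases hne : s.Nonempty
  · by_cases hbdd : BddAbove s
    · set u := sSup s with hu
      have humem : u ∈ s := hsclosed.csSup_mem hne hbdd
      have hdown : ∀ x y, x ≤ y → y ∈ s → x ∈ s := by
        intro x y hxy hy
        have h := hanti hxy
        dsimp only at h
        simp only [hs, Set.mem_setOf_eq] at hy ⊢
        linarith
      have hle : ∀ x, x ≤ u → a * x + b ≤ f x := fun x hx => hdown x u hx humem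
      have hgt : ∀ x, u < x → f x ≤ a * x + b := by
        intro x hx
        by_contra hcon
        push_neg at hcon
        exact absurd (le_csSup hbdd (show x ∈ s from le_of_lt hcon)) (by linarith)
      have hgeu : f u ≤ a * u + b := by
        have htd : Filter.Tendsto (fun x => f x - (a * x + b)) (nhdsWithin u (Ioi u))
            (nhds (f u - (a * u + b))) :=
          (((hcont.sub ((continuous_const.mul continuous_id).add continuous_const)).continuousAt).continuousWithinAt)
        have hev : ∀ᶠ x in nhdsWithin u (Ioi u), f x - (a * x + b) ≤ 0 :=
          eventually_nhdsWithin_of_forall (fun x hx => by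
            simp only [Set.mem_Ioi] at hx
            have := hgt x hx; linarith)
        have := le_of_tendsto htd hev
        linarith
      have hfu : f u = a * u + b := le_antisymm hgeu (hle u le_rfl)
      -- the new witness
      refine ⟨fun i => if h : (i : ℕ) = 0 then u else max u (c ⟨(i:ℕ)-1, by omega⟩), ?_,
        fun j => if h : (j:ℕ) = 0 ∨ ∃ hl : (j:ℕ)-1 < n, c ⟨(j:ℕ)-1, hl⟩ < u then a
          else P ⟨(j:ℕ)-1, by omega⟩,
        fun j => if h : (j:ℕ) = 0 ∨ ∃ hl : (j:ℕ)-1 < n, c ⟨(j:ℕ)-1, hl⟩ < u then b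
          else Q ⟨(j:ℕ)-1, by omega⟩, ?_⟩
      · intro i j hij
        have hij' : (i : ℕ) ≤ (j : ℕ) := hij
        dsimp only
        by_cases hi : (i : ℕ) = 0 <;> by_cases hj : (j : ℕ) = 0
        · simp [hi, hj]
        · rw [dif_pos hi, dif_neg hj]; exact le_max_left _ _
        · omega
        · rw [dif_neg hi, dif_neg hj]
          exact max_le_max le_rfl (hc (by simp only [Fin.le_def]; omega))
      · intro j y h1 h2
        dsimp only
        by_cases hj : (j : ℕ) = 0
        · have hyu : y ≤ u := by
            have h0 := h2 ⟨0, by omega⟩ (by simp only [Fin.mk_val]; omega)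
            simpa using h0
          have hmin : min (f y) (a * y + b) = a * y + b := min_eq_right (hle y hyu)
          rw [dif_pos (Or.inl hj), dif_pos (Or.inl hj), hmin]
        · have h0j : (0:ℕ) < (j:ℕ) := Nat.pos_of_ne_zero hj
          have hyu : u ≤ y := by
            have h0 := h1 ⟨0, by omega⟩ (by simp only [Fin.mk_val]; omega)
            simpa using h0
          have hmin : min (f y) (a * y + b) = f y := min_eq_left (by
            rcases eq_or_lt_of_le hyu with h | h
            · rw [← h, hfu]
            · linarith [hgt y h])
          rw [hmin]
          by_cases hcase : (j:ℕ) = 0 ∨ ∃ hl : (j:ℕ)-1 < n, c ⟨(j:ℕ)-1, hl⟩ < u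
          · rw [dif_pos hcase, dif_pos hcase]
            obtain ⟨hl, hcu2⟩ := hcase.resolve_left hj
            -- region forces y = u
            have hup : y ≤ max u (c ⟨(j:ℕ)-1, hl⟩) := by
              have h0 := h2 ⟨(j:ℕ)-1+1, by omega⟩ (by simp only [Fin.mk_val]; omega)
              simp only [dif_neg (by omega : ¬((j:ℕ)-1+1 = 0))] at h0
              have hci : c ⟨(j:ℕ)-1+1-1, by omega⟩ = c ⟨(j:ℕ)-1, hl⟩ := congrArg c (Fin.ext (by simp))
              exact hci ▸ h0
            have hyequ : y = u := le_antisymm (by rw [max_eq_left hcu2.le] at hup; exact hup) hyu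
            rw [hyequ, hfu]
          · rw [dif_neg hcase, dif_neg hcase]
            -- use the old piece j-1
            refine hPQ ⟨(j:ℕ)-1, by omega⟩ y ?_ ?_
            · intro i hi
              simp only [Fin.mk_val] at hi
              have h0 := h1 ⟨(i:ℕ)+1, by omega⟩ (by simp only [Fin.mk_val]; omega)
              simp only [dif_neg (by omega : ¬((i:ℕ)+1 = 0))] at h0
              have hci : c ⟨(i:ℕ)+1-1, by omega⟩ = c i := congrArg c (Fin.ext (by simp))
              rw [hci] at h0
              exact le_trans (le_max_right _ _) h0
            · intro i hi
              simp only [Fin.mk_val] at hi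
              have h0 := h2 ⟨(i:ℕ)+1, by omega⟩ (by simp only [Fin.mk_val]; omega)
              simp only [dif_neg (by omega : ¬((i:ℕ)+1 = 0))] at h0
              have hci : c ⟨(i:ℕ)+1-1, by omega⟩ = c i := congrArg c (Fin.ext (by simp))
              rw [hci] at h0
              have hui : u ≤ c i := by
                have hjn : (j:ℕ)-1 < n := by omega
                have hnc : ¬ (c ⟨(j:ℕ)-1, hjn⟩ < u) := fun hcon => (not_or.mp hcase).2 ⟨hjn, hcon⟩
                exact le_trans (not_lt.mp hnc) (hc (by simp only [Fin.le_def]; omega))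
              rw [max_eq_right hui] at h0
              exact h0
    · -- s unbounded above: min = affine everywhere
      have hall : ∀ x, min (f x) (a * x + b) = a * x + b := by
        intro x
        obtain ⟨y, hy, hxy⟩ := not_bddAbove_iff.mp hbdd x
        have h := hanti (le_of_lt hxy)
        dsimp only at h
        simp only [hs, Set.mem_setOf_eq] at hy
        exact min_eq_right (by linarith)
      refine wit_mono (n := 0) (wit_congr (fun x => (hall x).symm)
        ⟨fun i => 0, monotone_const, fun _ => a, fun _ => b, fun j y _ _ => rfl⟩) (Nat.zero_le _)
  · -- s empty: min = f
    have hall : ∀ x, min (f x) (a * x + b) = f x := by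
      intro x
      have : ¬ (a * x + b ≤ f x) := fun h => hne ⟨x, h⟩
      exact min_eq_left (by linarith)
    exact wit_mono (n := n) (wit_congr (fun x => (hall x).symm) ⟨c, hc, P, Q, hPQ⟩) (by omega)

end PL

namespace PL
open Set

noncomputable def envf (T : Finset (ℝ × ℝ)) (hT : T.Nonempty) : ℝ → ℝ :=
  fun x => T.inf' hT (fun t => t.1 * x + t.2)

theorem envf_cont (T : Finset (ℝ × ℝ)) (hT : T.Nonempty) : Continuous (envf T hT) :=
  Continuous.finset_inf'_apply hT
    (fun t _ => (continuous_const.mul continuous_id).add continuous_const)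

theorem envf_between (T : Finset (ℝ × ℝ)) (hT : T.Nonempty) :
    ∀ x t y : ℝ, x ≤ t → t ≤ y → min (envf T hT x) (envf T hT y) ≤ envf T hT t := by
  intro x t y hxt hty
  simp only [envf]
  rw [Finset.le_inf'_iff]
  intro p hp
  have hx : envf T hT x ≤ p.1 * x + p.2 := Finset.inf'_le _ hp
  have hy : envf T hT y ≤ p.1 * y + p.2 := Finset.inf'_le _ hp
  rcases le_or_gt 0 p.1 with h | h
  · exact le_trans (min_le_left _ _) (hx.trans (by nlinarith))
  · exact le_trans (min_le_right _ _) (hy.trans (by nlinarith))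

theorem wit_env (T : Finset (ℝ × ℝ)) (hT : T.Nonempty) :
    Wit (envf T hT) ((T.image Prod.fst).card - 1) := by
  classical
  induction T using Finset.strongInduction with
  | _ T ih =>
  -- the max slope
  have hTi : (T.image Prod.fst).Nonempty := hT.image _
  set A := (T.image Prod.fst).max' hTi with hA
  have hAmem : A ∈ T.image Prod.fst := (T.image Prod.fst).max'_mem hTi
  obtain ⟨p0, hp0T, hp0A⟩ := Finset.mem_image.mp hAmem
  set T1 := T.filter (fun p => p.1 = A) with hT1
  set T2 := T.filter (fun p => p.1 ≠ A) with hT2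
  have hT1ne : T1.Nonempty := ⟨p0, Finset.mem_filter.mpr ⟨hp0T, hp0A⟩⟩
  have hT1i : (T1.image Prod.snd).Nonempty := hT1ne.image _
  set B := (T1.image Prod.snd).min' hT1i with hB
  have hABmem : (A, B) ∈ T1 := by
    obtain ⟨q, hq, hqB⟩ := Finset.mem_image.mp ((T1.image Prod.snd).min'_mem hT1i)
    have : q = (A, B) := by
      have := (Finset.mem_filter.mp hq).2
      exact Prod.ext this hqB
    exact this ▸ hq
  have hABT : (A, B) ∈ T := (Finset.mem_filter.mp hABmem).1
  -- envelope of T1 is the affine function A x + B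
  have henv1 : ∀ x, ∀ p ∈ T1, A * x + B ≤ p.1 * x + p.2 := by
    intro x p hp
    rcases Finset.mem_filter.mp hp with ⟨hpT, hpA⟩
    have : B ≤ p.2 := Finset.min'_le _ _ (Finset.mem_image_of_mem _ hp)
    rw [hpA]
    linarith
  by_cases hT2ne : T2.Nonempty
  · -- inductive case
    have hsub : T2 ⊂ T := by
      refine Finset.ssubset_iff_of_subset (Finset.filter_subset _ _) |>.mpr
        ⟨(A, B), hABT, fun hmem => ?_⟩
      exact (Finset.mem_filter.mp hmem).2 rfl
    have ihW := ih T2 hsub hT2ne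
    -- pointwise min formula
    have hmin : ∀ x, envf T hT x = min (envf T2 hT2ne x) (A * x + B) := by
      intro x
      apply le_antisymm
      · apply le_min
        · obtain ⟨q, hq, hqe⟩ := Finset.exists_mem_eq_inf' hT2ne (fun t => t.1 * x + t.2)
          show (T.inf' hT fun t => t.1 * x + t.2) ≤ T2.inf' hT2ne fun t => t.1 * x + t.2
          rw [hqe]
          exact Finset.inf'_le _ (Finset.mem_filter.mp hq).1
        · exact Finset.inf'_le _ hABT
      · obtain ⟨q, hq, hqe⟩ := Finset.exists_mem_eq_inf' hT (fun t => t.1 * x + t.2)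
        show (T2.inf' hT2ne fun t => t.1 * x + t.2) ⊓ (A * x + B) ≤ T.inf' hT fun t => t.1 * x + t.2
        rw [hqe]
        by_cases hqA : q.1 = A
        · have : q ∈ T1 := Finset.mem_filter.mpr ⟨hq, hqA⟩
          exact le_trans (min_le_right _ _) (henv1 x q this)
        · have : q ∈ T2 := Finset.mem_filter.mpr ⟨hq, hqA⟩
          exact le_trans (min_le_left _ _) (Finset.inf'_le _ this)
    -- antitone of envf T2 - affine
    have hanti : Antitone (fun x => envf T2 hT2ne x - (A * x + B)) := by
      intro x y hxy
      dsimp only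
      obtain ⟨q, hq, hqe⟩ := Finset.exists_mem_eq_inf' hT2ne (fun t => t.1 * x + t.2)
      have hqA : q.1 ≤ A := Finset.le_max' _ _
        (Finset.mem_image_of_mem Prod.fst (Finset.mem_filter.mp hq).1)
      have h1 : envf T2 hT2ne y ≤ q.1 * y + q.2 := Finset.inf'_le _ hq
      have h2 : envf T2 hT2ne x = q.1 * x + q.2 := hqe
      nlinarith [mul_le_mul_of_nonneg_right (sub_nonneg.mpr hqA) (sub_nonneg.mpr hxy)]
    -- cardinalities
    have hcard2 : (T2.image Prod.fst).card = (T.image Prod.fst).card - 1 := by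
      have himg : T2.image Prod.fst = (T.image Prod.fst).erase A := by
        ext a
        simp only [Finset.mem_image, Finset.mem_erase, hT2, Finset.mem_filter]
        constructor
        · rintro ⟨p, ⟨hpT, hpA⟩, rfl⟩
          exact ⟨hpA, ⟨p, hpT, rfl⟩⟩
        · rintro ⟨haA, p, hpT, rfl⟩
          exact ⟨p, ⟨hpT, haA⟩, rfl⟩
      rw [himg, Finset.card_erase_of_mem hAmem]
    have hm2 : 1 ≤ (T2.image Prod.fst).card := Finset.card_pos.mpr (hT2ne.image _)
    have hWmin : Wit (fun x => min (envf T2 hT2ne x) (A * x + B))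
        ((T2.image Prod.fst).card - 1 + 1) :=
      wit_min_affine ihW (envf_cont T2 hT2ne) A B hanti
    refine wit_congr (fun x => (hmin x).symm) (wit_mono hWmin (by omega))
  · -- T2 empty: envelope equals the affine function
    have hall : ∀ p ∈ T, p.1 = A := by
      intro p hp
      by_contra hcon
      exact hT2ne ⟨p, Finset.mem_filter.mpr ⟨hp, hcon⟩⟩
    have heq : ∀ x, envf T hT x = A * x + B := by
      intro x
      apply le_antisymm (Finset.inf'_le _ hABT)
      simp only [envf]
      apply Finset.le_inf'
      intro p hp
      exact henv1 x p (Finset.mem_filter.mpr ⟨hp, hall p hp⟩)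
    refine wit_mono (n := 0) (wit_congr (fun x => (heq x).symm)
      ⟨fun i => 0, monotone_const, fun _ => A, fun _ => B, fun j y _ _ => rfl⟩) (Nat.zero_le _)

end PL

namespace PL
open Set

theorem affine_of_pairwise {F : ℝ → ℝ} {S : Set ℝ}
    (hp : ∀ y₁ ∈ S, ∀ y₂ ∈ S, y₁ < y₂ → ∃ a b : ℝ, ∀ y ∈ Icc y₁ y₂, F y = a * y + b) :
    ∃ a b : ℝ, ∀ y ∈ S, F y = a * y + b := by
  classical
  by_cases hsub : ∀ y₁ ∈ S, ∀ y₂ ∈ S, y₁ = y₂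
  · rcases Set.eq_empty_or_nonempty S with rfl | ⟨y₀, hy₀⟩
    · exact ⟨0, 0, fun y hy => absurd hy (Set.notMem_empty y)⟩
    · exact ⟨0, F y₀, fun y hy => by rw [hsub y hy y₀ hy₀]; ring⟩
  · push_neg at hsub
    obtain ⟨z₁, hz₁, z₂, hz₂, hne⟩ := hsub
    obtain ⟨y₁, hy₁, y₂, hy₂, h12⟩ : ∃ y₁ ∈ S, ∃ y₂ ∈ S, y₁ < y₂ := by
      rcases lt_or_gt_of_ne hne with h | h
      · exact ⟨z₁, hz₁, z₂, hz₂, h⟩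
      · exact ⟨z₂, hz₂, z₁, hz₁, h⟩
    obtain ⟨a, b, hab⟩ := hp y₁ hy₁ y₂ hy₂ h12
    refine ⟨a, b, fun y hy => ?_⟩
    set u₁ := min y y₁ with hu₁
    set u₂ := max y y₂ with hu₂
    have hu₁S : u₁ ∈ S := by rcases min_cases y y₁ with ⟨h,_⟩|⟨h,_⟩ <;> rw [hu₁, h] <;> assumption
    have hu₂S : u₂ ∈ S := by rcases max_cases y y₂ with ⟨h,_⟩|⟨h,_⟩ <;> rw [hu₂, h] <;> assumption
    have hu12 : u₁ < u₂ := lt_of_le_of_lt (min_le_right _ _) (lt_of_lt_of_le h12 (le_max_right _ _))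
    obtain ⟨a', b', hab'⟩ := hp u₁ hu₁S u₂ hu₂S hu12
    have he1 : a' * y₁ + b' = a * y₁ + b := by
      rw [← hab' y₁ ⟨min_le_right _ _, le_trans h12.le (le_max_right _ _)⟩,
        hab y₁ ⟨le_refl _, h12.le⟩]
    have he2 : a' * y₂ + b' = a * y₂ + b := by
      rw [← hab' y₂ ⟨le_trans (min_le_right _ _) h12.le, le_max_right _ _⟩,
        hab y₂ ⟨h12.le, le_refl _⟩]
    obtain ⟨ha, hb⟩ := two_point (ne_of_lt h12) he1 he2
    rw [← ha, ← hb]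
    exact hab' y ⟨min_le_left _ _, le_max_left _ _⟩

end PL

namespace PL
open Set

theorem wit_comp {φ ψ : ℝ → ℝ} {m n : ℕ} (hφ : Wit φ m) (hψ : Wit ψ n)
    (hbet : ∀ x t y : ℝ, x ≤ t → t ≤ y → min (ψ x) (ψ y) ≤ ψ t) :
    Wit (fun x => φ (ψ x)) (n + 2 * m) := by
  classical
  obtain ⟨c, hc, Γ, Δ, hψP⟩ := hψ
  obtain ⟨d, hd, Pf, Qf, hφP⟩ := hφ
  set lv : Fin m → ℝ := fun k =>
    if h : ({x | d k ≤ ψ x}).Nonempty ∧ BddBelow {x | d k ≤ ψ x}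
    then sInf {x | d k ≤ ψ x} else 0 with hlv
  set rv : Fin m → ℝ := fun k =>
    if h : ({x | d k ≤ ψ x}).Nonempty ∧ BddAbove {x | d k ≤ ψ x}
    then sSup {x | d k ≤ ψ x} else 0 with hrv
  set L : List ℝ := (List.ofFn c) ++ ((List.ofFn lv) ++ (List.ofFn rv)) with hL
  set LS : List ℝ := L.mergeSort (· ≤ ·) with hLS
  have hlen : LS.length = n + 2 * m := by
    rw [hLS, (L.mergeSort_perm (· ≤ ·)).length_eq, hL]
    simp [List.length_append]
    ring
  have hsort : LS.Pairwise (· ≤ ·) := List.pairwise_mergeSort' (· ≤ ·) L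
  have hmemL : ∀ v ∈ L, ∃ k : Fin LS.length, LS.get k = v := by
    intro v hv
    have : v ∈ LS := ((L.mergeSort_perm (· ≤ ·)).mem_iff).mpr hv
    obtain ⟨k, hk⟩ := List.mem_iff_get.mp this
    exact ⟨k, hk⟩
  refine ⟨fun i => LS.get ⟨(i : ℕ), by omega⟩, ?_, ?_⟩
  · intro i j hij
    exact hsort.rel_get_of_le (by simpa using (show (i:ℕ) ≤ (j:ℕ) from hij))
  · have hch : ∀ j : Fin (n + 2*m + 1), ∃ a b : ℝ, ∀ y : ℝ,
        (∀ i : Fin (n + 2*m), (i:ℕ) < (j:ℕ) → LS.get ⟨(i:ℕ), by omega⟩ ≤ y) →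
        (∀ i : Fin (n + 2*m), (j:ℕ) ≤ (i:ℕ) → y ≤ LS.get ⟨(i:ℕ), by omega⟩) →
        φ (ψ y) = a * y + b := by
      intro j
      set S : Set ℝ := {y | (∀ i : Fin (n + 2*m), (i:ℕ) < (j:ℕ) → LS.get ⟨(i:ℕ), by omega⟩ ≤ y) ∧
        (∀ i : Fin (n + 2*m), (j:ℕ) ≤ (i:ℕ) → y ≤ LS.get ⟨(i:ℕ), by omega⟩)} with hS
      suffices h : ∃ a b : ℝ, ∀ y ∈ S, φ (ψ y) = a * y + b by
        obtain ⟨a, b, hab⟩ := h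
        exact ⟨a, b, fun y h1 h2 => hab y ⟨h1, h2⟩⟩
      apply affine_of_pairwise
      intro y₁ hy₁ y₂ hy₂ h12
      -- all breakpoint values avoid (y₁, y₂)
      have havoidL : ∀ v ∈ L, v ≤ y₁ ∨ y₂ ≤ v := by
        intro v hv
        obtain ⟨k, hk⟩ := hmemL v hv
        rcases lt_or_ge (k : ℕ) (j : ℕ) with h | h
        · left
          have := hy₁.1 ⟨(k:ℕ), by omega⟩ (by simpa using h)
          rw [← hk]
          exact this
        · right
          have := hy₂.2 ⟨(k:ℕ), by omega⟩ (by simpa using h)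
          rw [← hk]
          exact this
      have havoid_c : ∀ i : Fin n, c i ≤ y₁ ∨ y₂ ≤ c i := by
        intro i
        exact havoidL (c i) (by rw [hL]; simp [List.mem_ofFn])
      obtain ⟨i0, hi0⟩ := piece_of_avoid c hc y₁ y₂ h12.le havoid_c
      have hψaff : ∀ y ∈ Icc y₁ y₂, ψ y = Γ i0 * y + Δ i0 := by
        intro y hy
        exact hψP i0 y (hi0 y hy).1 (hi0 y hy).2
      set g := Γ i0 with hg
      set e := Δ i0 with he
      have hv1 : ψ y₁ = g * y₁ + e := hψaff y₁ ⟨le_refl _, h12.le⟩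
      have hv2 : ψ y₂ = g * y₂ + e := hψaff y₂ ⟨h12.le, le_refl _⟩
      -- levels avoid the open value interval
      have havoid_d : ∀ k : Fin m, d k ≤ min (ψ y₁) (ψ y₂) ∨ max (ψ y₁) (ψ y₂) ≤ d k := by
        intro k
        by_contra hcon
        push_neg at hcon
        obtain ⟨hk1, hk2⟩ := hcon
        rcases lt_trichotomy (ψ y₁) (ψ y₂) with hvv | hvv | hvv
        · -- increasing: use sInf / lv
          have hgpos : 0 < g := by nlinarith
          have hgne : g ≠ 0 := ne_of_gt hgpos
          have hd1 : ψ y₁ < d k := by rw [min_eq_left hvv.le] at hk1; exact hk1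
          have hd2 : d k < ψ y₂ := by rw [max_eq_right hvv.le] at hk2; exact hk2
          set z := (d k - e) / g with hzdef
          have hz : g * z + e = d k := by rw [hzdef]; field_simp; ring
          have hz1 : y₁ < z := by nlinarith
          have hz2 : z < y₂ := by nlinarith
          have hzmem : z ∈ {x | d k ≤ ψ x} := by
            have hzz : ψ z = g * z + e := hψaff z ⟨hz1.le, hz2.le⟩
            show d k ≤ ψ z
            rw [hzz, hz]
          have hlb : ∀ x ∈ {x | d k ≤ ψ x}, z ≤ x := by
            intro x hx
            by_contra hxz
            push_neg at hxz
            simp only [Set.mem_setOf_eq] at hx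
            rcases lt_or_ge x y₁ with hxy | hxy
            · have hb := hbet x y₁ y₂ hxy.le h12.le
              have hdd : d k ≤ min (ψ x) (ψ y₂) := le_min hx hd2.le
              have : d k ≤ ψ y₁ := le_trans hdd hb
              linarith
            · have hxx : ψ x = g * x + e := hψaff x ⟨hxy, le_trans hxz.le hz2.le⟩
              nlinarith
          have hinf : sInf {x | d k ≤ ψ x} = z :=
            le_antisymm (csInf_le ⟨z, fun x hx => hlb x hx⟩ hzmem)
              (le_csInf ⟨z, hzmem⟩ hlb)
          have hlvk : lv k = z := by
            have hcond : ({x | d k ≤ ψ x}).Nonempty ∧ BddBelow {x | d k ≤ ψ x} :=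
              ⟨⟨z, hzmem⟩, ⟨z, fun x hx => hlb x hx⟩⟩
            rw [hlv]
            dsimp only
            rw [dif_pos hcond]
            exact hinf
          have hmem : lv k ∈ L := by rw [hL]; simp [List.mem_ofFn]
          rcases havoidL (lv k) hmem with h | h <;> rw [hlvk] at h <;> linarith
        · rw [hvv] at hk1 hk2
          simp only [min_self, max_self] at hk1 hk2
          linarith
        · -- decreasing: use sSup / rv
          have hgneg : g < 0 := by nlinarith
          have hgne : g ≠ 0 := ne_of_lt hgneg
          have hd1 : ψ y₂ < d k := by rw [min_eq_right hvv.le] at hk1; exact hk1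
          have hd2 : d k < ψ y₁ := by rw [max_eq_left hvv.le] at hk2; exact hk2
          set z := (d k - e) / g with hzdef
          have hz : g * z + e = d k := by rw [hzdef]; field_simp; ring
          have hz1 : y₁ < z := by nlinarith
          have hz2 : z < y₂ := by nlinarith
          have hzmem : z ∈ {x | d k ≤ ψ x} := by
            have hzz : ψ z = g * z + e := hψaff z ⟨hz1.le, hz2.le⟩
            show d k ≤ ψ z
            rw [hzz, hz]
          have hub : ∀ x ∈ {x | d k ≤ ψ x}, x ≤ z := by
            intro x hx
            by_contra hxz
            push_neg at hxz
            simp only [Set.mem_setOf_eq] at hx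
            rcases lt_or_ge y₂ x with hxy | hxy
            · have hb := hbet y₁ y₂ x h12.le hxy.le
              have hdd : d k ≤ min (ψ y₁) (ψ x) := le_min hd2.le hx
              have : d k ≤ ψ y₂ := le_trans hdd hb
              linarith
            · have hxx : ψ x = g * x + e := hψaff x ⟨le_trans hz1.le hxz.le, hxy⟩
              nlinarith
          have hsup : sSup {x | d k ≤ ψ x} = z :=
            le_antisymm (csSup_le ⟨z, hzmem⟩ hub)
              (le_csSup ⟨z, fun x hx => hub x hx⟩ hzmem)
          have hrvk : rv k = z := by
            have hcond : ({x | d k ≤ ψ x}).Nonempty ∧ BddAbove {x | d k ≤ ψ x} :=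
              ⟨⟨z, hzmem⟩, ⟨z, fun x hx => hub x hx⟩⟩
            rw [hrv]
            dsimp only
            rw [dif_pos hcond]
            exact hsup
          have hmem : rv k ∈ L := by rw [hL]; simp [List.mem_ofFn]
          rcases havoidL (rv k) hmem with h | h <;> rw [hrvk] at h <;> linarith
      obtain ⟨k0, hk0⟩ := piece_of_avoid d hd (min (ψ y₁) (ψ y₂)) (max (ψ y₁) (ψ y₂))
        (min_le_max) havoid_d
      have hφaff : ∀ t ∈ Icc (min (ψ y₁) (ψ y₂)) (max (ψ y₁) (ψ y₂)),
          φ t = Pf k0 * t + Qf k0 := by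
        intro t ht
        exact hφP k0 t (hk0 t ht).1 (hk0 t ht).2
      refine ⟨Pf k0 * g, Pf k0 * e + Qf k0, fun y hy => ?_⟩
      have hψy : ψ y = g * y + e := hψaff y hy
      have hmem : ψ y ∈ Icc (min (ψ y₁) (ψ y₂)) (max (ψ y₁) (ψ y₂)) := by
        constructor
        · rcases le_or_gt 0 g with hgs | hgs
          · refine le_trans (min_le_left _ _) ?_
            rw [hv1, hψy]
            nlinarith [hy.1]
          · refine le_trans (min_le_right _ _) ?_
            rw [hv2, hψy]
            nlinarith [hy.2]
        · rcases le_or_gt 0 g with hgs | hgs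
          · refine le_trans ?_ (le_max_right _ _)
            rw [hv2, hψy]
            nlinarith [hy.2]
          · refine le_trans ?_ (le_max_left _ _)
            rw [hv1, hψy]
            nlinarith [hy.1]
      rw [hφaff (ψ y) hmem, hψy]
      ring
    choose P Q hPQ using hch
    exact ⟨P, Q, fun j y h1 h2 => hPQ j y (fun i hi => h1 i hi) (fun i hi => h2 i hi)⟩

end PL

namespace PL
open Set

theorem env_bridge (F : Finset (ℝ → ℝ)) (hF : F.Nonempty)
    (hFa : ∀ f ∈ F, ∃ a b : ℝ, ∀ x : ℝ, f x = a * x + b) :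
    ∃ (T : Finset (ℝ × ℝ)) (hT : T.Nonempty),
      ∀ x : ℝ, F.inf' hF (fun f => f x) = envf T hT x := by
  classical
  set T : Finset (ℝ × ℝ) :=
    F.attach.image (fun f => ((hFa f.1 f.2).choose, (hFa f.1 f.2).choose_spec.choose)) with hTdef
  have hT : T.Nonempty := (hF.attach).image _
  refine ⟨T, hT, fun x => ?_⟩
  apply le_antisymm
  · obtain ⟨t, ht, hte⟩ := Finset.exists_mem_eq_inf' hT (fun t => t.1 * x + t.2)
    show F.inf' hF (fun f => f x) ≤ T.inf' hT (fun t => t.1 * x + t.2)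
    rw [hte]
    obtain ⟨f, _, hfe⟩ := Finset.mem_image.mp (hTdef ▸ ht)
    have hfx : f.1 x = t.1 * x + t.2 := by
      rw [← hfe]
      exact (hFa f.1 f.2).choose_spec.choose_spec x
    rw [← hfx]
    exact Finset.inf'_le _ f.2
  · obtain ⟨f, hf, hfe⟩ := Finset.exists_mem_eq_inf' hF (fun f => f x)
    show T.inf' hT (fun t => t.1 * x + t.2) ≤ F.inf' hF (fun f => f x)
    rw [hfe]
    have h2 := (hFa f hf).choose_spec.choose_spec x
    rw [h2]
    have hmem : ((hFa f hf).choose, (hFa f hf).choose_spec.choose) ∈ T := by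
      rw [hTdef]
      exact Finset.mem_image.mpr ⟨⟨f, hf⟩, Finset.mem_attach _ _, rfl⟩
    exact Finset.inf'_le _ hmem

theorem env_bridge_sup (F : Finset (ℝ → ℝ)) (hF : F.Nonempty)
    (hFa : ∀ f ∈ F, ∃ a b : ℝ, ∀ x : ℝ, f x = a * x + b) :
    ∃ (T : Finset (ℝ × ℝ)) (hT : T.Nonempty),
      ∀ x : ℝ, F.sup' hF (fun f => f x) = - envf T hT x := by
  classical
  have hFa' : ∀ f ∈ F.image (fun f => fun x => -(f x)), ∃ a b : ℝ, ∀ x : ℝ, f x = a * x + b := by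
    intro f hf
    obtain ⟨g, hg, rfl⟩ := Finset.mem_image.mp hf
    obtain ⟨a, b, hab⟩ := hFa g hg
    exact ⟨-a, -b, fun x => by show -g x = -a * x + -b; rw [hab x]; ring⟩
  obtain ⟨T, hT, hTe⟩ := env_bridge (F.image (fun f => fun x => -(f x))) (hF.image _) hFa'
  refine ⟨T, hT, fun x => ?_⟩
  rw [← hTe x]
  rw [eq_neg_iff_add_eq_zero]
  have : ((F.image (fun f => fun x => -(f x))).inf' (hF.image _) (fun f => f x))
      = - (F.sup' hF (fun f => f x)) := by
    apply le_antisymm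
    · obtain ⟨f, hf, hfe⟩ := Finset.exists_mem_eq_sup' hF (fun f => f x)
      rw [hfe]
      exact Finset.inf'_le _ (Finset.mem_image.mpr ⟨f, hf, rfl⟩)
    · rw [Finset.le_inf'_iff]
      intro g hg
      obtain ⟨f, hf, rfl⟩ := Finset.mem_image.mp hg
      simp only [neg_le_neg_iff]
      exact Finset.le_sup' (fun f => f x) hf
  rw [this]
  ring

theorem wit_nPieces {f : ℝ → ℝ} (hne : ∃ k, PiecewiseAffineWith f k) :
    Wit f (nPieces f - 1) ∧ 1 ≤ nPieces f := by
  obtain ⟨k, hk⟩ := hne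
  have hmem : nPieces f ∈ {k | PiecewiseAffineWith f k} := Nat.sInf_mem ⟨k, hk⟩
  exact ⟨wit_of_paw hmem, hmem.1⟩

end PL


open PL Set

/-- if `F`, `G` are nonempty finite sets of affine functions and
`H = {f ∘ g | f ∈ F, g ∈ G}`, then the lower envelope `H_↓` is piecewise
linear with `p(H_↓) ≤ 4 p(F_↓) + 2 p(G_↓) + 2 p(G_↑)`. -/
theorem nPieces_lower_envelope_comp (F G H : Finset (ℝ → ℝ))
    (hF : F.Nonempty) (hG : G.Nonempty) (hH : H.Nonempty)
    (hFAff : ∀ f ∈ F, ∃ a b : ℝ, ∀ x : ℝ, f x = a * x + b)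
    (hGAff : ∀ g ∈ G, ∃ a b : ℝ, ∀ x : ℝ, g x = a * x + b)
    (hHmem : ∀ h : ℝ → ℝ, h ∈ H ↔ ∃ f ∈ F, ∃ g ∈ G, h = f ∘ g) :
    (∃ k : ℕ, PiecewiseAffineWith (fun x : ℝ => H.inf' hH (fun h => h x)) k) ∧
    nPieces (fun x : ℝ => H.inf' hH (fun h => h x)) ≤
      4 * nPieces (fun x : ℝ => F.inf' hF (fun f => f x)) +
      2 * nPieces (fun x : ℝ => G.inf' hG (fun g => g x)) +
      2 * nPieces (fun x : ℝ => G.sup' hG (fun g => g x)) := by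
  classical
  set Fd : ℝ → ℝ := fun x => F.inf' hF (fun f => f x) with hFdDef
  set Gd : ℝ → ℝ := fun x => G.inf' hG (fun g => g x) with hGdDef
  set Gu : ℝ → ℝ := fun x => G.sup' hG (fun g => g x) with hGuDef
  set Hd : ℝ → ℝ := fun x => H.inf' hH (fun h => h x) with hHdDef
  -- affine envelope representations
  obtain ⟨TF, hTFne, hbF⟩ := env_bridge F hF hFAff
  obtain ⟨TGd, hTGdne, hbGd⟩ := env_bridge G hG hGAff
  obtain ⟨TGu, hTGune, hbGu⟩ := env_bridge_sup G hG hGAff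
  have hHAff : ∀ h ∈ H, ∃ a b : ℝ, ∀ x : ℝ, h x = a * x + b := by
    intro h hh
    obtain ⟨f, hf, g, hg, rfl⟩ := (hHmem h).mp hh
    obtain ⟨af, bf, habf⟩ := hFAff f hf
    obtain ⟨ag, bg, habg⟩ := hGAff g hg
    exact ⟨af * ag, af * bg + bf, fun x => by
      show f (g x) = af * ag * x + (af * bg + bf)
      rw [habf (g x), habg x]; ring⟩
  obtain ⟨TH, hTHne, hbH⟩ := env_bridge H hH hHAff
  -- existence of PL structure, minimal witnesses
  have hexF : ∃ k, PiecewiseAffineWith Fd k :=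
    ⟨(TF.image Prod.fst).card - 1 + 1,
      paw_of_wit (wit_congr (fun x => (hbF x).symm) (wit_env TF hTFne))⟩
  have hexGd : ∃ k, PiecewiseAffineWith Gd k :=
    ⟨(TGd.image Prod.fst).card - 1 + 1,
      paw_of_wit (wit_congr (fun x => (hbGd x).symm) (wit_env TGd hTGdne))⟩
  have hexGu : ∃ k, PiecewiseAffineWith Gu k :=
    ⟨(TGu.image Prod.fst).card - 1 + 1,
      paw_of_wit (wit_congr (fun x => (hbGu x).symm) (wit_neg_fun (wit_env TGu hTGune)))⟩
  obtain ⟨hWF, hp1⟩ := wit_nPieces hexF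
  obtain ⟨hWGd, hq1⟩ := wit_nPieces hexGd
  obtain ⟨hWGu, hr1⟩ := wit_nPieces hexGu
  set p := nPieces Fd with hpDef
  set q := nPieces Gd with hqDef
  set r := nPieces Gu with hrDef
  -- between properties
  have hbetGd : ∀ x t y : ℝ, x ≤ t → t ≤ y → min (Gd x) (Gd y) ≤ Gd t := by
    intro x t y hxt hty
    rw [hGdDef]
    dsimp only
    rw [Finset.le_inf'_iff]
    intro g hg
    obtain ⟨a, b, hab⟩ := hGAff g hg
    have h1 : Gd x ≤ g x := Finset.inf'_le _ hg
    have h2 : Gd y ≤ g y := Finset.inf'_le _ hg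
    rcases le_or_gt 0 a with ha | ha
    · refine le_trans (min_le_left _ _) (h1.trans ?_)
      rw [hab x, hab t]; nlinarith
    · refine le_trans (min_le_right _ _) (h2.trans ?_)
      rw [hab y, hab t]; nlinarith
  have hbetnGu : ∀ x t y : ℝ, x ≤ t → t ≤ y →
      min (-(Gu x)) (-(Gu y)) ≤ -(Gu t) := by
    intro x t y hxt hty
    have : Gu t ≤ max (Gu x) (Gu y) := by
      rw [hGuDef]
      dsimp only
      rw [Finset.sup'_le_iff]
      intro g hg
      obtain ⟨a, b, hab⟩ := hGAff g hg
      have h1 : g x ≤ Gu x := Finset.le_sup' (fun g => g x) hg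
      have h2 : g y ≤ Gu y := Finset.le_sup' (fun g => g y) hg
      rcases le_or_gt 0 a with ha | ha
      · refine le_trans ?_ (le_trans h2 (le_max_right _ _))
        rw [hab y, hab t]; nlinarith
      · refine le_trans ?_ (le_trans h1 (le_max_left _ _))
        rw [hab x, hab t]; nlinarith
    rcases max_cases (Gu x) (Gu y) with ⟨hm, _⟩ | ⟨hm, _⟩
    · rw [hm] at this; exact le_trans (min_le_left _ _) (neg_le_neg this)
    · rw [hm] at this; exact le_trans (min_le_right _ _) (neg_le_neg this)
  -- the two composite functions
  have hWA : Wit (fun x => Fd (Gd x)) ((q - 1) + 2 * (p - 1)) := wit_comp hWF hWGd hbetGd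
  have hWB : Wit (fun x => Fd (Gu x)) ((r - 1) + 2 * (p - 1)) := by
    have h1 : Wit (fun t => Fd (-t)) (p - 1) := wit_neg_arg hWF
    have h2 : Wit (fun x => -(Gu x)) (r - 1) := wit_neg_fun hWGu
    have h3 := wit_comp h1 h2 hbetnGu
    exact wit_congr (fun x => by show Fd (-(-(Gu x))) = Fd (Gu x); rw [neg_neg]) h3
  -- KEY pointwise identity
  have hKEY : ∀ x : ℝ, Hd x = min (Fd (Gd x)) (Fd (Gu x)) := by
    intro x
    apply le_antisymm
    · apply le_min
      · obtain ⟨g0, hg0, hg0e⟩ := Finset.exists_mem_eq_inf' hG (fun g => g x)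
        obtain ⟨f0, hf0, hf0e⟩ := Finset.exists_mem_eq_inf' hF (fun f => f (Gd x))
        have hmem : f0 ∘ g0 ∈ H := (hHmem _).mpr ⟨f0, hf0, g0, hg0, rfl⟩
        have hgx : Gd x = g0 x := hg0e
        have hfx : Fd (Gd x) = f0 (Gd x) := hf0e
        calc Hd x ≤ (f0 ∘ g0) x := Finset.inf'_le _ hmem
          _ = f0 (Gd x) := by rw [hgx]; rfl
          _ = Fd (Gd x) := hfx.symm
      · obtain ⟨g0, hg0, hg0e⟩ := Finset.exists_mem_eq_sup' hG (fun g => g x)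
        obtain ⟨f0, hf0, hf0e⟩ := Finset.exists_mem_eq_inf' hF (fun f => f (Gu x))
        have hmem : f0 ∘ g0 ∈ H := (hHmem _).mpr ⟨f0, hf0, g0, hg0, rfl⟩
        have hgx : Gu x = g0 x := hg0e
        have hfx : Fd (Gu x) = f0 (Gu x) := hf0e
        calc Hd x ≤ (f0 ∘ g0) x := Finset.inf'_le _ hmem
          _ = f0 (Gu x) := by rw [hgx]; rfl
          _ = Fd (Gu x) := hfx.symm
    · obtain ⟨h, hh, hhe⟩ := Finset.exists_mem_eq_inf' hH (fun h => h x)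
      obtain ⟨f, hf, g, hg, rfl⟩ := (hHmem h).mp hh
      obtain ⟨a, b, hab⟩ := hFAff f hf
      have hl : Gd x ≤ g x := Finset.inf'_le _ hg
      have hu : g x ≤ Gu x := Finset.le_sup' (fun g => g x) hg
      have hHx : Hd x = f (g x) := hhe
      have hfd : Fd (Gd x) ≤ f (Gd x) := Finset.inf'_le _ hf
      have hfu : Fd (Gu x) ≤ f (Gu x) := Finset.inf'_le _ hf
      rw [hHx]
      rcases le_or_gt 0 a with ha | ha
      · refine le_trans (min_le_left _ _) (le_trans hfd ?_)
        rw [hab (Gd x), hab (g x)]; nlinarith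
      · refine le_trans (min_le_right _ _) (le_trans hfu ?_)
        rw [hab (Gu x), hab (g x)]; nlinarith
  -- continuity of Hd
  have hHdcont : Continuous Hd := (envf_cont TH hTHne).congr (fun x => (hbH x).symm)
  -- witness data for Hd coming from TH
  obtain ⟨c0, hc0, P0, Q0, h0⟩ :=
    wit_congr (fun x => (hbH x).symm) (wit_env TH hTHne)
  -- claim C
  have claimC : ∀ u v : ℝ, u < v → ∃ t ∈ TH, ∃ y₁ y₂ : ℝ, y₁ ∈ Icc u v ∧ y₂ ∈ Icc u v ∧
      y₁ < y₂ ∧ ∀ y ∈ Icc y₁ y₂, t.1 * y + t.2 = Hd y := by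
    intro u v huv
    have hicc : (Icc u v).Infinite := Set.Icc_infinite huv
    obtain ⟨t, ht, hinf⟩ := pigeon TH (fun t => {y | t.1 * y + t.2 = Hd y}) (Icc u v) hicc
      (by
        intro y _
        obtain ⟨t, ht', hte⟩ := Finset.exists_mem_eq_inf' hTHne (fun t => t.1 * y + t.2)
        refine ⟨t, ht', ?_⟩
        simp only [Set.mem_setOf_eq]
        have hHdy : Hd y = t.1 * y + t.2 := (hbH y).trans hte
        exact hHdy.symm)
    obtain ⟨jj, _, hinf2⟩ := pigeon (Finset.univ : Finset (Fin _))
      (fun jj => {y | (∀ i : Fin ((Finset.image Prod.fst TH).card - 1), (i:ℕ) < (jj:ℕ) → c0 i ≤ y) ∧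
        (∀ i : Fin ((Finset.image Prod.fst TH).card - 1), (jj:ℕ) ≤ (i:ℕ) → y ≤ c0 i)})
      _ hinf (fun y _ => by obtain ⟨jj, hj⟩ := cover c0 hc0 y; exact ⟨jj, Finset.mem_univ _, hj⟩)
    obtain ⟨y₁, hy₁, y₂, hy₂, hne⟩ := hinf2.nontrivial
    have hz₁S : min y₁ y₂ ∈ (Icc u v ∩ {y | t.1 * y + t.2 = Hd y}) ∩
        {y | (∀ i : Fin ((Finset.image Prod.fst TH).card - 1), (i:ℕ) < (jj:ℕ) → c0 i ≤ y) ∧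
          (∀ i : Fin ((Finset.image Prod.fst TH).card - 1), (jj:ℕ) ≤ (i:ℕ) → y ≤ c0 i)} := by
      rcases min_cases y₁ y₂ with ⟨hm, _⟩ | ⟨hm, _⟩ <;> rw [hm] <;> assumption
    have hz₂S : max y₁ y₂ ∈ (Icc u v ∩ {y | t.1 * y + t.2 = Hd y}) ∩
        {y | (∀ i : Fin ((Finset.image Prod.fst TH).card - 1), (i:ℕ) < (jj:ℕ) → c0 i ≤ y) ∧
          (∀ i : Fin ((Finset.image Prod.fst TH).card - 1), (jj:ℕ) ≤ (i:ℕ) → y ≤ c0 i)} := by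
      rcases max_cases y₁ y₂ with ⟨hm, _⟩ | ⟨hm, _⟩ <;> rw [hm] <;> assumption
    have hzlt : min y₁ y₂ < max y₁ y₂ := min_lt_max.mpr hne
    refine ⟨t, ht, min y₁ y₂, max y₁ y₂, hz₁S.1.1, hz₂S.1.1, hzlt, ?_⟩
    intro y hy
    have hreg : ∀ w ∈ Icc (min y₁ y₂) (max y₁ y₂), Hd w = P0 jj * w + Q0 jj := by
      intro w hw
      exact h0 jj w (fun i hi => le_trans (hz₁S.2.1 i hi) hw.1)
        (fun i hi => le_trans hw.2 (hz₂S.2.2 i hi))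
    have e₁ : t.1 * (min y₁ y₂) + t.2 = P0 jj * (min y₁ y₂) + Q0 jj := by
      rw [← hreg (min y₁ y₂) ⟨le_rfl, hzlt.le⟩]
      exact hz₁S.1.2
    have e₂ : t.1 * (max y₁ y₂) + t.2 = P0 jj * (max y₁ y₂) + Q0 jj := by
      rw [← hreg (max y₁ y₂) ⟨hzlt.le, le_rfl⟩]
      exact hz₂S.1.2
    obtain ⟨hP, hQ⟩ := two_point (ne_of_lt hzlt) e₁ e₂
    rw [hP, hQ, hreg y hy]
  -- the reduced family
  set Φ : Finset (ℝ × ℝ) := TH.filter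
    (fun t => ∃ u v : ℝ, u < v ∧ ∀ y ∈ Icc u v, t.1 * y + t.2 = Hd y) with hΦDef
  have hΦne : Φ.Nonempty := by
    obtain ⟨t, ht, y₁, y₂, _, _, h12, hag⟩ := claimC 0 1 zero_lt_one
    exact ⟨t, Finset.mem_filter.mpr ⟨ht, y₁, y₂, h12, hag⟩⟩
  have hΦeq : ∀ x : ℝ, Hd x = envf Φ hΦne x := by
    have hged : ∀ x : ℝ, ∃ t ∈ Φ, t.1 * x + t.2 ≤ Hd x := by
      intro x
      by_contra hcon
      push_neg at hcon
      have hDx : 0 < envf Φ hΦne x - Hd x := by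
        obtain ⟨t, ht, hte⟩ := Finset.exists_mem_eq_inf' hΦne (fun t => t.1 * x + t.2)
        have hlt := hcon t ht
        have he : envf Φ hΦne x = t.1 * x + t.2 := hte
        linarith
      have hopen : IsOpen {y | 0 < envf Φ hΦne y - Hd y} :=
        isOpen_lt continuous_const ((envf_cont Φ hΦne).sub hHdcont)
      obtain ⟨δ, hδ, hball⟩ := Metric.isOpen_iff.mp hopen x hDx
      obtain ⟨t, ht, y₁, y₂, hy₁, hy₂, h12, hag⟩ := claimC x (x + δ/2) (by linarith)
      have htΦ : t ∈ Φ := Finset.mem_filter.mpr ⟨ht, y₁, y₂, h12, hag⟩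
      have hy₁ball : y₁ ∈ Metric.ball x δ := by
        rw [Metric.mem_ball, Real.dist_eq, abs_lt]
        constructor
        · linarith [hy₁.1]
        · linarith [hy₁.2]
      have hpos := hball hy₁ball
      simp only [Set.mem_setOf_eq] at hpos
      have hle : envf Φ hΦne y₁ ≤ t.1 * y₁ + t.2 := Finset.inf'_le _ htΦ
      rw [hag y₁ ⟨le_rfl, h12.le⟩] at hle
      linarith
    intro x
    apply le_antisymm
    · obtain ⟨t0, ht0, hte⟩ := Finset.exists_mem_eq_inf' hΦne (fun t => t.1 * x + t.2)
      have he : envf Φ hΦne x = t0.1 * x + t0.2 := hte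
      rw [he]
      have hx : Hd x = envf TH hTHne x := hbH x
      rw [hx]
      exact Finset.inf'_le _ (Finset.mem_filter.mp ht0).1
    · obtain ⟨t, htΦ, hle⟩ := hged x
      exact le_trans (Finset.inf'_le _ htΦ) hle
  have hWHd : Wit Hd ((Φ.image Prod.fst).card - 1) :=
    wit_congr (fun x => (hΦeq x).symm) (wit_env Φ hΦne)
  -- slope bound
  obtain ⟨cA, hcA, PA, QA, hA⟩ := hWA
  obtain ⟨cB, hcB, PB, QB, hB⟩ := hWB
  set WA : Finset ℝ := Finset.image PA Finset.univ with hWADef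
  set WB : Finset ℝ := Finset.image PB Finset.univ with hWBDef
  have hslope : ∀ t ∈ Φ, t.1 ∈ WA ∪ WB := by
    intro t htΦ
    obtain ⟨htTH, u, v, huv, hag⟩ := Finset.mem_filter.mp htΦ
    have hAB : {y | y ∈ Icc u v ∧ Fd (Gd y) = Hd y}.Infinite ∨
        {y | y ∈ Icc u v ∧ Fd (Gu y) = Hd y}.Infinite := by
      by_contra hcon
      push_neg at hcon
      obtain ⟨hfin1, hfin2⟩ := hcon
      have hsub : Icc u v ⊆ {y | y ∈ Icc u v ∧ Fd (Gd y) = Hd y} ∪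
          {y | y ∈ Icc u v ∧ Fd (Gu y) = Hd y} := by
        intro y hy
        rcases min_cases (Fd (Gd y)) (Fd (Gu y)) with ⟨hm, _⟩ | ⟨hm, _⟩
        · exact Or.inl ⟨hy, by rw [hKEY y, hm]⟩
        · exact Or.inr ⟨hy, by rw [hKEY y, hm]⟩
      exact (Set.Icc_infinite huv) ((hfin1.union hfin2).subset hsub)
    rcases hAB with hInf | hInf
    · obtain ⟨jj, _, hinf2⟩ := pigeon (Finset.univ : Finset (Fin _))
        (fun jj => {y | (∀ i : Fin (q - 1 + 2 * (p - 1)), (i:ℕ) < (jj:ℕ) → cA i ≤ y) ∧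
          (∀ i : Fin (q - 1 + 2 * (p - 1)), (jj:ℕ) ≤ (i:ℕ) → y ≤ cA i)})
        _ hInf (fun y _ => by obtain ⟨jj, hj⟩ := cover cA hcA y; exact ⟨jj, Finset.mem_univ _, hj⟩)
      obtain ⟨y₁, hy₁, y₂, hy₂, hne⟩ := hinf2.nontrivial
      have e₁ : t.1 * y₁ + t.2 = PA jj * y₁ + QA jj := by
        rw [hag y₁ hy₁.1.1, ← hy₁.1.2]
        exact hA jj y₁ hy₁.2.1 hy₁.2.2
      have e₂ : t.1 * y₂ + t.2 = PA jj * y₂ + QA jj := by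
        rw [hag y₂ hy₂.1.1, ← hy₂.1.2]
        exact hA jj y₂ hy₂.2.1 hy₂.2.2
      obtain ⟨hP, _⟩ := two_point hne e₁ e₂
      exact Finset.mem_union_left _ (Finset.mem_image.mpr ⟨jj, Finset.mem_univ _, hP.symm⟩)
    · obtain ⟨jj, _, hinf2⟩ := pigeon (Finset.univ : Finset (Fin _))
        (fun jj => {y | (∀ i : Fin (r - 1 + 2 * (p - 1)), (i:ℕ) < (jj:ℕ) → cB i ≤ y) ∧
          (∀ i : Fin (r - 1 + 2 * (p - 1)), (jj:ℕ) ≤ (i:ℕ) → y ≤ cB i)})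
        _ hInf (fun y _ => by obtain ⟨jj, hj⟩ := cover cB hcB y; exact ⟨jj, Finset.mem_univ _, hj⟩)
      obtain ⟨y₁, hy₁, y₂, hy₂, hne⟩ := hinf2.nontrivial
      have e₁ : t.1 * y₁ + t.2 = PB jj * y₁ + QB jj := by
        rw [hag y₁ hy₁.1.1, ← hy₁.1.2]
        exact hB jj y₁ hy₁.2.1 hy₁.2.2
      have e₂ : t.1 * y₂ + t.2 = PB jj * y₂ + QB jj := by
        rw [hag y₂ hy₂.1.1, ← hy₂.1.2]
        exact hB jj y₂ hy₂.2.1 hy₂.2.2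
      obtain ⟨hP, _⟩ := two_point hne e₁ e₂
      exact Finset.mem_union_right _ (Finset.mem_image.mpr ⟨jj, Finset.mem_univ _, hP.symm⟩)
  -- cardinality chain
  set κ := (Φ.image Prod.fst).card with hκDef
  have hκ1 : 1 ≤ κ := Finset.card_pos.mpr (hΦne.image _)
  have hκle : κ ≤ ((q - 1) + 2 * (p - 1) + 1) + ((r - 1) + 2 * (p - 1) + 1) := by
    have hsub : Φ.image Prod.fst ⊆ WA ∪ WB := by
      intro s hs
      obtain ⟨t, ht, rfl⟩ := Finset.mem_image.mp hs
      exact hslope t ht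
    calc κ ≤ (WA ∪ WB).card := Finset.card_le_card hsub
      _ ≤ WA.card + WB.card := Finset.card_union_le _ _
      _ ≤ ((q - 1) + 2 * (p - 1) + 1) + ((r - 1) + 2 * (p - 1) + 1) := by
          gcongr <;>
            exact (Finset.card_image_le).trans (by simp [Finset.card_univ])
  have hpaw : PiecewiseAffineWith Hd κ := by
    have hh := paw_of_wit hWHd
    rwa [Nat.sub_add_cancel hκ1] at hh
  refine ⟨⟨κ, hpaw⟩, ?_⟩
  have h1 : nPieces Hd ≤ κ := Nat.sInf_le hpaw
  omega
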